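/- Let H₁, H₂ : ℝ → Matrix (Fin n) (Fin n) ℂ be continuous with H₁(s) and H₂(s) Hermitian for every s, and let U₁, U₂ : ℝ → Matrix (Fin n) (Fin n) ℂ be differentiable solutions of U_j'(t) = −i·H_j(t)·U_j(t) with U_j(0) = 1, for j = 1,2. Then for every t ≥ 0, ‖U₁(t)†·U₂(t) − 1‖ ≤ ∫₀^t ‖H₁(s) − H₂(s)‖ ds, where ‖·‖ is the operator norm; equivalently, ‖U₁(t) − U₂(t)‖ ≤ ∫₀^t ‖H₁(s) − H₂(s)‖ ds. -/

import Mathlib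

open scoped Matrix.Norms.L2Operator
open scoped Matrix

lemma aux_unitary (n : ℕ) (H : ℝ → Matrix (Fin n) (Fin n) ℂ)
    (hH : ∀ s : ℝ, (H s).IsHermitian)
    (U : ℝ → Matrix (Fin n) (Fin n) ℂ) (hU0 : U 0 = 1)
    (hU : ∀ t : ℝ, HasDerivAt U ((-Complex.I) • (H t * U t)) t) :
    ∀ t : ℝ, (U t)ᴴ * U t = 1 := by
  have hstar : ∀ t : ℝ, HasDerivAt (fun s => (U s)ᴴ)
      (Complex.I • ((U t)ᴴ * H t)) t := by
    intro t
    have := (hU t).star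
    have he : star ((-Complex.I) • (H t * U t)) = Complex.I • ((U t)ᴴ * H t) := by
      rw [star_smul, star_mul]
      simp [Matrix.star_eq_conjTranspose, (hH t).eq]
    rw [he] at this
    simpa [Matrix.star_eq_conjTranspose] using this
  have hderiv : ∀ t : ℝ, HasDerivAt (fun s => (U s)ᴴ * U s) 0 t := by
    intro t
    have h := (hstar t).mul (hU t)
    have : Complex.I • ((U t)ᴴ * H t) * U t + (U t)ᴴ * ((-Complex.I) • (H t * U t)) = 0 := by
      rw [smul_mul_assoc, mul_smul_comm, mul_assoc, neg_smul, add_neg_eq_zero]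
    rwa [this] at h
  have hconst : ∀ t : ℝ, (U t)ᴴ * U t = (U 0)ᴴ * U 0 := by
    intro t
    exact is_const_of_deriv_eq_zero (fun s => (hderiv s).differentiableAt)
      (fun s => (hderiv s).deriv) t 0
  intro t
  rw [hconst t, hU0]
  simp

lemma aux_norm_le_one (n : ℕ) (U : Matrix (Fin n) (Fin n) ℂ)
    (h : Uᴴ * U = 1) : ‖U‖ ≤ 1 := by
  have h1 : ‖U‖ * ‖U‖ = ‖(1 : Matrix (Fin n) (Fin n) ℂ)‖ := by
    rw [← Matrix.l2_opNorm_conjTranspose_mul_self, h]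
  have h2 : ‖(1 : Matrix (Fin n) (Fin n) ℂ)‖ * ‖(1 : Matrix (Fin n) (Fin n) ℂ)‖
      = ‖(1 : Matrix (Fin n) (Fin n) ℂ)‖ := by
    conv_lhs => rw [← Matrix.l2_opNorm_conjTranspose_mul_self (1 : Matrix (Fin n) (Fin n) ℂ)]
    rw [Matrix.conjTranspose_one, mul_one]
  have h3 : (0:ℝ) ≤ ‖U‖ := norm_nonneg _
  have h5 : ‖U‖ * ‖U‖ * (‖U‖ * ‖U‖) = ‖U‖ * ‖U‖ := by rw [h1]; exact h2
  nlinarith [h5, sq_nonneg (‖U‖ - 1), sq_nonneg (‖U‖ + 1), sq_nonneg (‖U‖ * ‖U‖ - 1)]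

set_option maxHeartbeats 1000000 in
/-- For two Schrödinger evolutions `U_j' = -i·H_j·U_j`, `U_j(0) = 1`, with
Hermitian continuous generators, the error operator `E(t) = U₁(t)† U₂(t) - 1` satisfies
`‖E(t)‖ ≤ ∫₀^t ‖H₁(s) - H₂(s)‖ ds` in operator norm, and likewise `‖U₁(t) - U₂(t)‖`. -/
theorem evolution_error_bound (n : ℕ)
    (H₁ H₂ : ℝ → Matrix (Fin n) (Fin n) ℂ)
    (hH₁c : Continuous H₁) (hH₂c : Continuous H₂)
    (hH₁ : ∀ s : ℝ, (H₁ s).IsHermitian) (hH₂ : ∀ s : ℝ, (H₂ s).IsHermitian)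
    (U₁ U₂ : ℝ → Matrix (Fin n) (Fin n) ℂ)
    (hU₁0 : U₁ 0 = 1) (hU₂0 : U₂ 0 = 1)
    (hU₁ : ∀ t : ℝ, HasDerivAt U₁ ((-Complex.I) • (H₁ t * U₁ t)) t)
    (hU₂ : ∀ t : ℝ, HasDerivAt U₂ ((-Complex.I) • (H₂ t * U₂ t)) t) :
    ∀ t : ℝ, 0 ≤ t →
      ‖(U₁ t)ᴴ * U₂ t - 1‖ ≤ (∫ s in (0:ℝ)..t, ‖H₁ s - H₂ s‖) ∧
      ‖U₁ t - U₂ t‖ ≤ (∫ s in (0:ℝ)..t, ‖H₁ s - H₂ s‖) := by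
  intro t ht
  have hu₁ : ∀ s : ℝ, (U₁ s)ᴴ * U₁ s = 1 := aux_unitary n H₁ hH₁ U₁ hU₁0 hU₁
  have hu₂ : ∀ s : ℝ, (U₂ s)ᴴ * U₂ s = 1 := aux_unitary n H₂ hH₂ U₂ hU₂0 hU₂
  have hn₁ : ∀ s : ℝ, ‖U₁ s‖ ≤ 1 := fun s => aux_norm_le_one n _ (hu₁ s)
  have hn₂ : ∀ s : ℝ, ‖U₂ s‖ ≤ 1 := fun s => aux_norm_le_one n _ (hu₂ s)
  have hn₁' : ∀ s : ℝ, ‖(U₁ s)ᴴ‖ ≤ 1 := by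
    intro s
    rw [Matrix.l2_opNorm_conjTranspose]
    exact hn₁ s
  -- derivative of the conjugate transpose of U₁
  have hstar : ∀ s : ℝ, HasDerivAt (fun r => (U₁ r)ᴴ)
      (Complex.I • ((U₁ s)ᴴ * H₁ s)) s := by
    intro s
    have := (hU₁ s).star
    have he : star ((-Complex.I) • (H₁ s * U₁ s)) = Complex.I • ((U₁ s)ᴴ * H₁ s) := by
      rw [star_smul, star_mul]
      simp [Matrix.star_eq_conjTranspose, (hH₁ s).eq]
    rw [he] at this
    simpa [Matrix.star_eq_conjTranspose] using this
  set E : ℝ → Matrix (Fin n) (Fin n) ℂ := fun s => (U₁ s)ᴴ * U₂ s - 1 with hE_def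
  set E' : ℝ → Matrix (Fin n) (Fin n) ℂ :=
    fun s => Complex.I • ((U₁ s)ᴴ * (H₁ s - H₂ s) * U₂ s) with hE'_def
  have hE : ∀ s : ℝ, HasDerivAt E (E' s) s := by
    intro s
    have h := ((hstar s).mul (hU₂ s)).sub_const 1
    have heq : Complex.I • ((U₁ s)ᴴ * H₁ s) * U₂ s
        + (U₁ s)ᴴ * ((-Complex.I) • (H₂ s * U₂ s)) = E' s := by
      simp only [hE'_def, smul_mul_assoc, mul_smul_comm, mul_assoc,
        mul_sub, sub_mul, smul_sub, neg_smul, mul_neg, sub_eq_add_neg,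
        add_mul, neg_mul, mul_add, smul_add, smul_neg]
    rwa [heq] at h
  have hU₁c : Continuous U₁ := by
    refine continuous_iff_continuousAt.mpr fun s => (hU₁ s).continuousAt
  have hU₂c : Continuous U₂ := by
    refine continuous_iff_continuousAt.mpr fun s => (hU₂ s).continuousAt
  have hU₁sc : Continuous fun s => (U₁ s)ᴴ := by
    simpa only [Matrix.star_eq_conjTranspose] using hU₁c.star
  have hE'c : Continuous E' := by
    exact ((hU₁sc.mul (hH₁c.sub hH₂c)).mul hU₂c).const_smul Complex.I
  have hftc : (∫ s in (0:ℝ)..t, E' s) = E t - E 0 :=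
    intervalIntegral.integral_eq_sub_of_hasDerivAt (fun s _ => hE s)
      (hE'c.intervalIntegrable 0 t)
  have hE0 : E 0 = 0 := by simp [hE_def, hU₁0, hU₂0]
  have hEt : E t = ∫ s in (0:ℝ)..t, E' s := by rw [hftc, hE0, sub_zero]
  have hbound : ∀ s : ℝ, ‖E' s‖ ≤ ‖H₁ s - H₂ s‖ := by
    intro s
    rw [hE'_def]
    have h1 : ‖Complex.I • ((U₁ s)ᴴ * (H₁ s - H₂ s) * U₂ s)‖
        = ‖(U₁ s)ᴴ * (H₁ s - H₂ s) * U₂ s‖ := by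
      rw [norm_smul, Complex.norm_I, one_mul]
    rw [h1]
    have hb1 := norm_mul_le ((U₁ s)ᴴ * (H₁ s - H₂ s)) (U₂ s)
    have hb2 := norm_mul_le ((U₁ s)ᴴ) (H₁ s - H₂ s)
    nlinarith [hb1, hb2, hn₁' s, hn₂ s, norm_nonneg ((U₁ s)ᴴ * (H₁ s - H₂ s) * U₂ s),
      norm_nonneg ((U₁ s)ᴴ * (H₁ s - H₂ s)), norm_nonneg (H₁ s - H₂ s),
      norm_nonneg (U₂ s), norm_nonneg ((U₁ s)ᴴ)]
  have hmain : ‖E t‖ ≤ ∫ s in (0:ℝ)..t, ‖H₁ s - H₂ s‖ := by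
    rw [hEt]
    calc ‖∫ s in (0:ℝ)..t, E' s‖ ≤ ∫ s in (0:ℝ)..t, ‖E' s‖ :=
          intervalIntegral.norm_integral_le_integral_norm ht
      _ ≤ ∫ s in (0:ℝ)..t, ‖H₁ s - H₂ s‖ := by
          apply intervalIntegral.integral_mono_on ht
            ((hE'c.norm).intervalIntegrable 0 t)
            (((hH₁c.sub hH₂c).norm).intervalIntegrable 0 t)
          exact fun s _ => hbound s
  refine ⟨hmain, ?_⟩
  have huu : U₁ t * (U₁ t)ᴴ = 1 := mul_eq_one_comm.mp (hu₁ t)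
  have hfac : U₁ t - U₂ t = -(U₁ t * E t) := by
    rw [hE_def]
    simp only [mul_sub, mul_one, ← mul_assoc, huu, one_mul]
    abel
  calc ‖U₁ t - U₂ t‖ = ‖U₁ t * E t‖ := by rw [hfac, norm_neg]
    _ ≤ ‖U₁ t‖ * ‖E t‖ := norm_mul_le _ _
    _ ≤ 1 * ‖E t‖ := mul_le_mul_of_nonneg_right (hn₁ t) (norm_nonneg _)
    _ = ‖E t‖ := one_mul _
    _ ≤ _ := hmain
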